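/- Let ℓ ≥ 2, let j be even with 1 ≤ j ≤ ℓ, and let w = (w₁, w₂, …, w_{2ℓ}) ∈ 𝔽₄^{2ℓ} with w₂ ≠ 0. If χ_w(O₀) = −1 + 4^{ℓ−1}, then χ_w(Z_{ℓ,j} \ O₀) = 2·4^{ℓ−1} or χ_w(Z_{ℓ,j} \ O₀) = −2·4^{ℓ−1}. -/

import Mathlib

/-- The quadratic form `Q_{ℓ,j}(x₁,…,x_{2ℓ}) = Σ_{i=1}^{j} (α x_{2i-1}² + x_{2i-1}x_{2i} + x_{2i}²)
+ Σ_{i=j+1}^{ℓ} x_{2i-1}x_{2i}`  (coordinates are 0-indexed in Lean). -/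
def Qform {F4 : Type*} [Field F4] (α : F4) (ℓ j : ℕ) (x : Fin (2 * ℓ) → F4) : F4 :=
  ∑ i : Fin ℓ,
    (let a := x ⟨2 * i.val, by have := i.isLt; omega⟩
     let b := x ⟨2 * i.val + 1, by have := i.isLt; omega⟩
     if i.val < j then α * a ^ 2 + a * b + b ^ 2 else a * b)

open scoped Classical in
/-- The value `(-1)^{tr(t)} ∈ ℂ`, where `tr : 𝔽₄ → 𝔽₂`, `tr(t) = t + t²`, is the trace map. -/
noncomputable def chi4 {F4 : Type*} [Field F4] (t : F4) : ℂ :=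
  if t + t ^ 2 = 0 then 1 else -1

/-- The character sum `χ_w(S) = Σ_{v ∈ S} (-1)^{tr(Σ_i w_i v_i)}`. -/
noncomputable def chiSum {F4 : Type*} [Field F4] {m : ℕ} (w : Fin m → F4)
    (S : Set (Fin m → F4)) : ℂ :=
  ∑ᶠ v ∈ S, chi4 (∑ i, w i * v i)

section Aux

variable {F4 : Type*} [Field F4] [Fintype F4] (hc : Fintype.card F4 = 4)
include hc

private lemma two_zero : (2 : F4) = 0 := by
  have h4 : ((4 : ℕ) : F4) = 0 := by
    rw [← hc]; exact FiniteField.cast_card_eq_zero F4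
  have : ((2 : F4)) ^ 2 = 0 := by push_cast at h4; linear_combination h4
  exact pow_eq_zero_iff (n := 2) (by norm_num) |>.mp this

private lemma addself (x : F4) : x + x = 0 := by
  have := two_zero hc
  linear_combination x * this

private lemma pow4 (x : F4) : x ^ 4 = x := by
  have := FiniteField.pow_card x
  rwa [hc] at this

private lemma tr_idem (t : F4) : t + t ^ 2 = 0 ∨ t + t ^ 2 = 1 := by
  have h2 := two_zero hc
  have hsq : (t + t ^ 2) ^ 2 = t + t ^ 2 := by
    have := pow4 hc t
    linear_combination this + t ^ 3 * h2
  rcases mul_eq_zero.mp (show (t + t ^ 2) * (t + t ^ 2 - 1) = 0 by linear_combination hsq) with h | h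
  · exact Or.inl h
  · exact Or.inr (by linear_combination h)

omit hc in
private lemma chi4_zero : chi4 (0 : F4) = 1 := by simp [chi4]

private lemma chi4_one : chi4 (1 : F4) = 1 := by
  have h2 := two_zero hc
  simp only [chi4, one_pow]
  rw [if_pos (by linear_combination h2)]

private lemma chi4_add (s t : F4) : chi4 (s + t) = chi4 s * chi4 t := by
  have h2 := two_zero hc
  have key : (s + t) + (s + t) ^ 2 = (s + s ^ 2) + (t + t ^ 2) := by
    linear_combination (s * t) * h2
  unfold chi4
  rcases tr_idem hc s with hs | hs <;> rcases tr_idem hc t with ht | ht <;>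
    rw [key, hs, ht] <;> simp [one_ne_zero, show (1 : F4) + 1 = 0 by linear_combination h2]

private lemma chi4_sq (t : F4) : chi4 (t ^ 2) = chi4 t := by
  have h4 := pow4 hc t
  unfold chi4
  rw [show t ^ 2 + (t ^ 2) ^ 2 = t + t ^ 2 by linear_combination h4]

private lemma chi4_sum {ι : Type*} (s : Finset ι) (f : ι → F4) :
    chi4 (∑ i ∈ s, f i) = ∏ i ∈ s, chi4 (f i) := by
  classical
  induction s using Finset.induction with
  | empty => simpa using chi4_zero
  | insert _ _ hx ih =>
    rw [Finset.sum_insert hx, Finset.prod_insert hx, chi4_add hc, ih]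

variable {α : F4} (hα : α ^ 2 = α + 1)
include hα

private lemma chi4_alpha : chi4 α = -1 := by
  have h2 := two_zero hc
  have h1 : α + α ^ 2 = 1 := by linear_combination hα + α * h2
  have : (1 : F4) ≠ 0 := one_ne_zero
  simp [chi4, h1, this]

private lemma sum_chi4 : ∑ t : F4, chi4 t = 0 := by
  have key : ∑ t : F4, chi4 t = ∑ t : F4, chi4 (α + t) :=
    (Fintype.sum_equiv (Equiv.addLeft α) _ _ (fun t => rfl)).symm
  have key2 : ∀ t : F4, chi4 (α + t) = -chi4 t := by
    intro t; rw [chi4_add hc, chi4_alpha hc hα]; ring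
  simp only [key2, Finset.sum_neg_distrib] at key
  have h2 : (2 : ℂ) * ∑ t : F4, chi4 t = 0 := by linear_combination key
  have := mul_eq_zero.mp h2
  simpa using this

private lemma chi4_a1 : chi4 (α + 1) = -1 := by
  have h2 := two_zero hc
  have h1 : (α + 1) + (α + 1) ^ 2 = 1 := by linear_combination hα + (2 * α + 1) * h2
  simp [chi4, h1, one_ne_zero]

omit hc hα in
private lemma shiftF {G : Type*} [AddCommGroup G] [Fintype G] (H : G → ℂ) (e : G) :
    ∑ t : G, H t = ∑ t : G, H (e + t) :=
  (Fintype.sum_equiv (Equiv.addLeft e) (fun t => H (e + t)) H (fun _ => rfl)).symm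

omit hc hα in
private lemma scaleF (H : F4 → ℂ) (d : F4) (hd : d ≠ 0) :
    ∑ t : F4, H t = ∑ t : F4, H (d * t) :=
  (Fintype.sum_equiv (Equiv.mulLeft₀ d hd) (fun t => H (d * t)) H (fun _ => rfl)).symm

open scoped Classical in
private lemma sum_chi4_mul (s : F4) :
    ∑ t : F4, chi4 (s * t) = if s = 0 then 4 else 0 := by
  rcases eq_or_ne s 0 with h | h
  · subst h
    rw [if_pos rfl]
    simp only [zero_mul, chi4_zero]
    rw [Finset.sum_const, Finset.card_univ, hc]
    norm_num
  · rw [if_neg h, ← scaleF chi4 s h]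
    exact sum_chi4 hc hα

private lemma sum_expand (f : F4 → ℂ) : ∑ t : F4, f t = f 0 + f 1 + f α + f (α + 1) := by
  classical
  have h2 := two_zero hc
  have h10 : (1 : F4) ≠ 0 := one_ne_zero
  have ha0 : α ≠ 0 := by intro h; rw [h] at hα; exact h10 (by linear_combination -hα)
  have ha1 : α ≠ 1 := by intro h; rw [h] at hα; exact h10 (by linear_combination -hα)
  have hb0 : α + 1 ≠ 0 := by intro h; exact ha1 (by linear_combination h - h2)
  have hb1 : α + 1 ≠ 1 := by intro h; exact ha0 (by linear_combination h)
  have hba : α + 1 ≠ α := by intro h; exact h10 (by linear_combination h)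
  have huniv : (Finset.univ : Finset F4) = {0, 1, α, α + 1} := by
    symm
    apply Finset.eq_univ_of_card
    rw [hc]
    rw [Finset.card_insert_of_notMem (by simp [h10.symm, ha0.symm, hb0.symm]),
      Finset.card_insert_of_notMem (by simp [ha1.symm, hb1.symm]),
      Finset.card_insert_of_notMem (by simp [hba.symm]), Finset.card_singleton]
  rw [huniv, Finset.sum_insert (by simp [h10.symm, ha0.symm, hb0.symm]),
    Finset.sum_insert (by simp [ha1.symm, hb1.symm]),
    Finset.sum_insert (by simp [hba.symm]), Finset.sum_singleton]
  ring

private lemma A0 : ∑ a : F4, ∑ b : F4, chi4 (α * a ^ 2 + a * b + b ^ 2) = -4 := by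
  have h2 := two_zero hc
  have h0_0 : chi4 (α * 0 ^ 2 + 0 * 0 + 0 ^ 2) = (1 : ℂ) := by
    rw [show (α * 0 ^ 2 + 0 * 0 + 0 ^ 2) = (0 : F4) by linear_combination (0 : F4) * hα]
    exact chi4_zero
  have h0_1 : chi4 (α * 0 ^ 2 + 0 * 1 + 1 ^ 2) = (1 : ℂ) := by
    rw [show (α * 0 ^ 2 + 0 * 1 + 1 ^ 2) = (1 : F4) by linear_combination (0 : F4) * hα]
    exact chi4_one hc
  have h0_α : chi4 (α * 0 ^ 2 + 0 * α + α ^ 2) = (-1 : ℂ) := by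
    rw [show (α * 0 ^ 2 + 0 * α + α ^ 2) = ((α + 1) : F4) by linear_combination (1) * hα]
    exact chi4_a1 hc hα
  have h0_αp1 : chi4 (α * 0 ^ 2 + 0 * (α + 1) + (α + 1) ^ 2) = (-1 : ℂ) := by
    rw [show (α * 0 ^ 2 + 0 * (α + 1) + (α + 1) ^ 2) = (α : F4) by linear_combination (1) * hα + (1 + α) * h2]
    exact chi4_alpha hc hα
  have h1_0 : chi4 (α * 1 ^ 2 + 1 * 0 + 0 ^ 2) = (-1 : ℂ) := by
    rw [show (α * 1 ^ 2 + 1 * 0 + 0 ^ 2) = (α : F4) by linear_combination (0 : F4) * hα]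
    exact chi4_alpha hc hα
  have h1_1 : chi4 (α * 1 ^ 2 + 1 * 1 + 1 ^ 2) = (-1 : ℂ) := by
    rw [show (α * 1 ^ 2 + 1 * 1 + 1 ^ 2) = (α : F4) by linear_combination (1) * h2]
    exact chi4_alpha hc hα
  have h1_α : chi4 (α * 1 ^ 2 + 1 * α + α ^ 2) = (-1 : ℂ) := by
    rw [show (α * 1 ^ 2 + 1 * α + α ^ 2) = ((α + 1) : F4) by linear_combination (1) * hα + (α) * h2]
    exact chi4_a1 hc hα
  have h1_αp1 : chi4 (α * 1 ^ 2 + 1 * (α + 1) + (α + 1) ^ 2) = (-1 : ℂ) := by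
    rw [show (α * 1 ^ 2 + 1 * (α + 1) + (α + 1) ^ 2) = ((α + 1) : F4) by linear_combination (1) * hα + (1 + 2 * α) * h2]
    exact chi4_a1 hc hα
  have hα_0 : chi4 (α * α ^ 2 + α * 0 + 0 ^ 2) = (1 : ℂ) := by
    rw [show (α * α ^ 2 + α * 0 + 0 ^ 2) = (1 : F4) by linear_combination (1 + α) * hα + (α) * h2]
    exact chi4_one hc
  have hα_1 : chi4 (α * α ^ 2 + α * 1 + 1 ^ 2) = (-1 : ℂ) := by
    rw [show (α * α ^ 2 + α * 1 + 1 ^ 2) = (α : F4) by linear_combination (1 + α) * hα + (1 + α) * h2]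
    exact chi4_alpha hc hα
  have hα_α : chi4 (α * α ^ 2 + α * α + α ^ 2) = (1 : ℂ) := by
    rw [show (α * α ^ 2 + α * α + α ^ 2) = (1 : F4) by linear_combination (3 + α) * hα + (1 + 2 * α) * h2]
    exact chi4_one hc
  have hα_αp1 : chi4 (α * α ^ 2 + α * (α + 1) + (α + 1) ^ 2) = (-1 : ℂ) := by
    rw [show (α * α ^ 2 + α * (α + 1) + (α + 1) ^ 2) = (α : F4) by linear_combination (3 + α) * hα + (2 + 3 * α) * h2]
    exact chi4_alpha hc hα
  have hαp1_0 : chi4 (α * (α + 1) ^ 2 + (α + 1) * 0 + 0 ^ 2) = (-1 : ℂ) := by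
    rw [show (α * (α + 1) ^ 2 + (α + 1) * 0 + 0 ^ 2) = ((α + 1) : F4) by linear_combination (3 + α) * hα + (1 + 2 * α) * h2]
    exact chi4_a1 hc hα
  have hαp1_1 : chi4 (α * (α + 1) ^ 2 + (α + 1) * 1 + 1 ^ 2) = (1 : ℂ) := by
    rw [show (α * (α + 1) ^ 2 + (α + 1) * 1 + 1 ^ 2) = (1 : F4) by linear_combination (3 + α) * hα + (2 + 3 * α) * h2]
    exact chi4_one hc
  have hαp1_α : chi4 (α * (α + 1) ^ 2 + (α + 1) * α + α ^ 2) = (1 : ℂ) := by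
    rw [show (α * (α + 1) ^ 2 + (α + 1) * α + α ^ 2) = (1 : F4) by linear_combination (5 + α) * hα + (2 + 4 * α) * h2]
    exact chi4_one hc
  have hαp1_αp1 : chi4 (α * (α + 1) ^ 2 + (α + 1) * (α + 1) + (α + 1) ^ 2) = (-1 : ℂ) := by
    rw [show (α * (α + 1) ^ 2 + (α + 1) * (α + 1) + (α + 1) ^ 2) = ((α + 1) : F4) by linear_combination (5 + α) * hα + (3 + 5 * α) * h2]
    exact chi4_a1 hc hα
  rw [sum_expand hc hα]
  rw [sum_expand hc hα (fun b => chi4 (α * 0 ^ 2 + 0 * b + b ^ 2)),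
    sum_expand hc hα (fun b => chi4 (α * 1 ^ 2 + 1 * b + b ^ 2)),
    sum_expand hc hα (fun b => chi4 (α * α ^ 2 + α * b + b ^ 2)),
    sum_expand hc hα (fun b => chi4 (α * (α + 1) ^ 2 + (α + 1) * b + b ^ 2))]
  rw [h0_0, h0_1, h0_α, h0_αp1, h1_0, h1_1, h1_α, h1_αp1, hα_0, hα_1, hα_α, hα_αp1,
    hαp1_0, hαp1_1, hαp1_α, hαp1_αp1]
  norm_num

private lemma aniso_shiftfree (c : F4) (hcne : c ≠ 0) :
    ∑ a : F4, ∑ b : F4, chi4 (c * (α * a ^ 2 + a * b + b ^ 2)) = -4 := by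
  set d : F4 := c⁻¹ ^ 2 with hd
  have hd0 : d ≠ 0 := pow_ne_zero _ (inv_ne_zero hcne)
  have hcd : c * d ^ 2 = 1 := by
    have h4 : c⁻¹ ^ 4 = c⁻¹ := pow4 hc c⁻¹
    calc c * d ^ 2 = c * c⁻¹ ^ 4 := by rw [hd]; ring
    _ = c * c⁻¹ := by rw [h4]
    _ = 1 := mul_inv_cancel₀ hcne
  have key : ∀ a b : F4, c * (α * (d * a) ^ 2 + (d * a) * (d * b) + (d * b) ^ 2)
      = α * a ^ 2 + a * b + b ^ 2 := by
    intro a b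
    linear_combination (α * a ^ 2 + a * b + b ^ 2) * hcd
  calc ∑ a : F4, ∑ b : F4, chi4 (c * (α * a ^ 2 + a * b + b ^ 2))
      = ∑ a : F4, ∑ b : F4, chi4 (c * (α * (d * a) ^ 2 + (d * a) * (d * b) + (d * b) ^ 2)) :=
        (scaleF (fun a => ∑ b : F4, chi4 (c * (α * a ^ 2 + a * b + b ^ 2))) d hd0).trans
          (Finset.sum_congr rfl (fun a _ =>
            scaleF (fun b => chi4 (c * (α * (d * a) ^ 2 + (d * a) * b + b ^ 2))) d hd0))
    _ = ∑ a : F4, ∑ b : F4, chi4 (α * a ^ 2 + a * b + b ^ 2) := by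
        refine Finset.sum_congr rfl (fun a _ => Finset.sum_congr rfl (fun b _ => ?_))
        rw [key a b]
    _ = -4 := A0 hc hα

private lemma aniso_plane (c u v : F4) (hcne : c ≠ 0) :
    ∑ a : F4, ∑ b : F4, chi4 (c * (α * a ^ 2 + a * b + b ^ 2) + (u * a + v * b))
      = -4 * chi4 ((α * v ^ 2 + v * u + u ^ 2) * c⁻¹) := by
  have h2 := two_zero hc
  set A : F4 := v * c⁻¹ with hA
  set B : F4 := u * c⁻¹ with hB
  have hcA : c * A = v := by rw [hA]; field_simp
  have hcB : c * B = u := by rw [hB]; field_simp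
  have hKval : c * (α * A ^ 2 + A * B + B ^ 2) = (α * v ^ 2 + v * u + u ^ 2) * c⁻¹ := by
    rw [hA, hB]
    field_simp
  have key : ∀ a b : F4, c * (α * (A + a) ^ 2 + (A + a) * (B + b) + (B + b) ^ 2)
      + (u * (A + a) + v * (B + b))
      = c * (α * A ^ 2 + A * B + B ^ 2) + c * (α * a ^ 2 + a * b + b ^ 2) := by
    intro a b
    rw [← hcA, ← hcB]
    linear_combination (c * (α * A * a + B * b + A * b + a * B + A * B)) * h2
  calc ∑ a : F4, ∑ b : F4, chi4 (c * (α * a ^ 2 + a * b + b ^ 2) + (u * a + v * b))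
      = ∑ a : F4, ∑ b : F4, chi4 (c * (α * (A + a) ^ 2 + (A + a) * (B + b) + (B + b) ^ 2)
          + (u * (A + a) + v * (B + b))) :=
        (shiftF (fun a => ∑ b : F4,
            chi4 (c * (α * a ^ 2 + a * b + b ^ 2) + (u * a + v * b))) A).trans
          (Finset.sum_congr rfl (fun a _ =>
            shiftF (fun b => chi4 (c * (α * (A + a) ^ 2 + (A + a) * b + b ^ 2)
              + (u * (A + a) + v * b))) B))
    _ = ∑ a : F4, ∑ b : F4, chi4 (c * (α * A ^ 2 + A * B + B ^ 2))
          * chi4 (c * (α * a ^ 2 + a * b + b ^ 2)) := by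
        refine Finset.sum_congr rfl (fun a _ => Finset.sum_congr rfl (fun b _ => ?_))
        rw [key a b, chi4_add hc]
    _ = chi4 (c * (α * A ^ 2 + A * B + B ^ 2))
          * ∑ a : F4, ∑ b : F4, chi4 (c * (α * a ^ 2 + a * b + b ^ 2)) := by
        rw [Finset.mul_sum]
        exact Finset.sum_congr rfl (fun a _ => by rw [Finset.mul_sum])
    _ = -4 * chi4 ((α * v ^ 2 + v * u + u ^ 2) * c⁻¹) := by
        rw [aniso_shiftfree hc hα c hcne, hKval]
        ring

open scoped Classical in
private lemma hyp_plane (c u v : F4) (hcne : c ≠ 0) :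
    ∑ a : F4, ∑ b : F4, chi4 (c * (a * b) + (u * a + v * b))
      = 4 * chi4 ((u * v) * c⁻¹) := by
  have h2 := two_zero hc
  have inner : ∀ a : F4, ∑ b : F4, chi4 (c * (a * b) + (u * a + v * b))
      = chi4 (u * a) * (if c * a + v = 0 then 4 else 0) := by
    intro a
    rw [← sum_chi4_mul hc hα (c * a + v), Finset.mul_sum]
    refine Finset.sum_congr rfl (fun b _ => ?_)
    rw [show c * (a * b) + (u * a + v * b) = u * a + (c * a + v) * b by ring, chi4_add hc]
  simp only [inner]
  rw [Finset.sum_eq_single (v * c⁻¹)]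
  · have hvc : c * (v * c⁻¹) = v := by field_simp
    rw [if_pos (by rw [hvc]; exact addself hc v)]
    ring
  · intro a _ hne
    rw [if_neg, mul_zero]
    intro h
    apply hne
    have hca : c * a = v := by linear_combination h - v * h2
    rw [← hca]
    field_simp
  · intro h
    exact absurd (Finset.mem_univ _) h

end Aux

private def il (ℓ : ℕ) (i : Fin ℓ) : Fin (2 * ℓ) := ⟨2 * i.val, by have := i.isLt; omega⟩
private def ir (ℓ : ℕ) (i : Fin ℓ) : Fin (2 * ℓ) := ⟨2 * i.val + 1, by have := i.isLt; omega⟩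

private def pairEquiv (ℓ : ℕ) : Fin ℓ × Fin 2 ≃ Fin (2 * ℓ) where
  toFun p := ⟨2 * p.1.val + p.2.val, by have := p.1.isLt; have := p.2.isLt; omega⟩
  invFun k := (⟨k.val / 2, by have := k.isLt; omega⟩, ⟨k.val % 2, by omega⟩)
  left_inv p := by
    obtain ⟨⟨a, ha⟩, ⟨b, hb⟩⟩ := p
    simp only [Prod.mk.injEq, Fin.mk.injEq]
    omega
  right_inv k := by
    obtain ⟨k, hk⟩ := k
    simp only [Fin.mk.injEq]
    omega

private lemma pair_sum {M : Type*} [AddCommMonoid M] (ℓ : ℕ) (f : Fin (2 * ℓ) → M) :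
    ∑ k, f k = ∑ i : Fin ℓ, (f (il ℓ i) + f (ir ℓ i)) := by
  rw [← Equiv.sum_comp (pairEquiv ℓ) f, Fintype.sum_prod_type]
  refine Finset.sum_congr rfl (fun i _ => ?_)
  rw [Fin.sum_univ_two]
  have e0 : pairEquiv ℓ (i, 0) = il ℓ i :=
    Fin.ext (by show 2 * i.val + (0 : Fin 2).val = 2 * i.val; simp)
  have e1 : pairEquiv ℓ (i, 1) = ir ℓ i :=
    Fin.ext (by show 2 * i.val + (1 : Fin 2).val = 2 * i.val + 1; simp)
  rw [e0, e1]

private lemma Qform_eq {F4 : Type*} [Field F4] (α : F4) (ℓ j : ℕ) (x : Fin (2 * ℓ) → F4) :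
    Qform α ℓ j x = ∑ i : Fin ℓ, (if i.val < j then
      α * (x (il ℓ i)) ^ 2 + x (il ℓ i) * x (ir ℓ i) + (x (ir ℓ i)) ^ 2
      else x (il ℓ i) * x (ir ℓ i)) := rfl

private def funEquiv (F4 : Type*) (ℓ : ℕ) : (Fin (2 * ℓ) → F4) ≃ (Fin ℓ → F4 × F4) where
  toFun x i := (x (il ℓ i), x (ir ℓ i))
  invFun y k := if h : k.val % 2 = 0 then (y ⟨k.val / 2, by have := k.isLt; omega⟩).1
    else (y ⟨k.val / 2, by have := k.isLt; omega⟩).2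
  left_inv x := by
    funext k
    by_cases h : k.val % 2 = 0
    · show (if h : k.val % 2 = 0 then _ else _) = x k
      rw [dif_pos h]
      have e : il ℓ ⟨k.val / 2, by have := k.isLt; omega⟩ = k :=
        Fin.ext (by show 2 * (k.val / 2) = k.val; omega)
      exact congrArg x e
    · show (if h : k.val % 2 = 0 then _ else _) = x k
      rw [dif_neg h]
      have e : ir ℓ ⟨k.val / 2, by have := k.isLt; omega⟩ = k :=
        Fin.ext (by show 2 * (k.val / 2) + 1 = k.val; omega)
      exact congrArg x e
  right_inv y := by
    funext i
    show ((if h : (il ℓ i).val % 2 = 0 then _ else _), (if h : (ir ℓ i).val % 2 = 0 then _ else _))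
      = y i
    rw [dif_pos (show (il ℓ i).val % 2 = 0 by show (2 * i.val) % 2 = 0; omega),
      dif_neg (show ¬((ir ℓ i).val % 2 = 0) by show ¬((2 * i.val + 1) % 2 = 0); omega)]
    have e1 : (⟨(il ℓ i).val / 2, by have := (il ℓ i).isLt; omega⟩ : Fin ℓ) = i :=
      Fin.ext (by show (2 * i.val) / 2 = i.val; omega)
    have e2 : (⟨(ir ℓ i).val / 2, by have := (ir ℓ i).isLt; omega⟩ : Fin ℓ) = i :=
      Fin.ext (by show (2 * i.val + 1) / 2 = i.val; omega)
    rw [e1, e2]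

private lemma card_filter_lt (ℓ j : ℕ) (hjl : j ≤ ℓ) :
    (Finset.univ.filter fun i : Fin ℓ => i.val < j).card = j := by
  classical
  rw [← Finset.card_range j]
  apply Finset.card_bij (fun (i : Fin ℓ) _ => i.val)
  · intro a ha
    simp only [Finset.mem_filter] at ha
    simpa using ha.2
  · intro a ha b hb h
    exact Fin.ext h
  · intro b hb
    simp only [Finset.mem_range] at hb
    exact ⟨⟨b, lt_of_lt_of_le hb hjl⟩, by simp [hb], rfl⟩

section Main
variable {F4 : Type*} [Field F4] [Fintype F4]

private lemma T_zero (hc : Fintype.card F4 = 4) {α : F4} (hα : α ^ 2 = α + 1)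
    (ℓ : ℕ) (w : Fin (2 * ℓ) → F4) (k0 : Fin (2 * ℓ)) (hw : w k0 ≠ 0) :
    ∑ x : Fin (2 * ℓ) → F4, chi4 (∑ k, w k * x k) = 0 := by
  classical
  set e : Fin (2 * ℓ) → F4 := Pi.single k0 (α * (w k0)⁻¹) with he
  have hwe : ∑ k, w k * e k = α := by
    rw [he]
    simp only [Pi.single_apply, mul_ite, mul_zero]
    rw [Finset.sum_ite_eq' Finset.univ k0 (fun k => w k * (α * (w k0)⁻¹))]
    rw [if_pos (Finset.mem_univ _)]
    field_simp
  have key := shiftF (fun x : Fin (2 * ℓ) → F4 => chi4 (∑ k, w k * x k)) e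
  have key2 : ∀ x : Fin (2 * ℓ) → F4, chi4 (∑ k, w k * (e + x) k)
      = -chi4 (∑ k, w k * x k) := by
    intro x
    have : (∑ k, w k * (e + x) k) = (∑ k, w k * e k) + ∑ k, w k * x k := by
      rw [← Finset.sum_add_distrib]
      exact Finset.sum_congr rfl (fun k _ => by simp [mul_add])
    rw [this, chi4_add hc, hwe, chi4_alpha hc hα]
    ring
  simp only [key2] at key
  rw [Finset.sum_neg_distrib] at key
  have h2S : (2 : ℂ) * ∑ x : Fin (2 * ℓ) → F4, chi4 (∑ k, w k * x k) = 0 := by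
    linear_combination key
  have := mul_eq_zero.mp h2S
  simpa using this

private lemma T_ne (hc : Fintype.card F4 = 4) {α : F4} (hα : α ^ 2 = α + 1)
    (ℓ j : ℕ) (hjl : j ≤ ℓ) (hjeven : Even j) (w : Fin (2 * ℓ) → F4) (c : F4) (hcne : c ≠ 0) :
    ∑ x : Fin (2 * ℓ) → F4, chi4 (c * Qform α ℓ j x + ∑ k, w k * x k)
      = 4 ^ ℓ * chi4 ((∑ i : Fin ℓ, (if i.val < j then
          α * (w (ir ℓ i)) ^ 2 + w (ir ℓ i) * w (il ℓ i) + (w (il ℓ i)) ^ 2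
          else w (il ℓ i) * w (ir ℓ i))) * c⁻¹) := by
  classical
  set u : Fin ℓ → F4 := fun i => w (il ℓ i) with hu
  set v : Fin ℓ → F4 := fun i => w (ir ℓ i) with hv
  set r : Fin ℓ → F4 := fun i => if i.val < j then α * (v i) ^ 2 + v i * u i + (u i) ^ 2
    else u i * v i with hr
  set g : Fin ℓ → F4 × F4 → ℂ := fun i p =>
    chi4 (c * (if i.val < j then α * p.1 ^ 2 + p.1 * p.2 + p.2 ^ 2 else p.1 * p.2)
      + (u i * p.1 + v i * p.2)) with hg
  have harg : ∀ x : Fin (2 * ℓ) → F4, c * Qform α ℓ j x + ∑ k, w k * x k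
      = ∑ i : Fin ℓ, (c * (if i.val < j then
          α * (x (il ℓ i)) ^ 2 + x (il ℓ i) * x (ir ℓ i) + (x (ir ℓ i)) ^ 2
          else x (il ℓ i) * x (ir ℓ i)) + (u i * x (il ℓ i) + v i * x (ir ℓ i))) := by
    intro x
    rw [Qform_eq, Finset.mul_sum, pair_sum ℓ (fun k => w k * x k), ← Finset.sum_add_distrib]
  calc ∑ x : Fin (2 * ℓ) → F4, chi4 (c * Qform α ℓ j x + ∑ k, w k * x k)
      = ∑ x : Fin (2 * ℓ) → F4, ∏ i : Fin ℓ, g i ((funEquiv F4 ℓ) x i) := by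
        refine Finset.sum_congr rfl (fun x _ => ?_)
        rw [harg x, chi4_sum hc]
        exact Finset.prod_congr rfl (fun i _ => rfl)
    _ = ∑ y : Fin ℓ → F4 × F4, ∏ i : Fin ℓ, g i (y i) :=
        Fintype.sum_equiv (funEquiv F4 ℓ) _ _ (fun x => rfl)
    _ = ∏ i : Fin ℓ, ∑ p : F4 × F4, g i p := (Fintype.prod_sum g).symm
    _ = ∏ i : Fin ℓ, ((if i.val < j then (-4 : ℂ) else 4) * chi4 (r i * c⁻¹)) := by
        refine Finset.prod_congr rfl (fun i _ => ?_)
        rw [Fintype.sum_prod_type]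
        by_cases hij : i.val < j
        · simp only [hg, hr, if_pos hij]
          exact aniso_plane hc hα c (u i) (v i) hcne
        · simp only [hg, hr, if_neg hij]
          exact hyp_plane hc hα c (u i) (v i) hcne
    _ = (∏ i : Fin ℓ, (if i.val < j then (-4 : ℂ) else 4))
          * ∏ i : Fin ℓ, chi4 (r i * c⁻¹) := Finset.prod_mul_distrib
    _ = 4 ^ ℓ * chi4 ((∑ i : Fin ℓ, r i) * c⁻¹) := by
        congr 1
        · rw [Finset.prod_ite, Finset.prod_const, Finset.prod_const, card_filter_lt ℓ j hjl]
          rw [show (Finset.univ.filter fun i : Fin ℓ => ¬(i.val < j)).card = ℓ - j by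
            rw [Finset.filter_not, Finset.card_sdiff_of_subset (Finset.filter_subset _ _),
              Finset.card_univ, Fintype.card_fin, card_filter_lt ℓ j hjl]]
          rw [Even.neg_pow hjeven, ← pow_add]
          congr 1
          omega
        · rw [show (∑ i : Fin ℓ, r i) * c⁻¹ = ∑ i : Fin ℓ, r i * c⁻¹ from Finset.sum_mul _ _ _,
            chi4_sum hc]

end Main

theorem stmt13 (F4 : Type*) [Field F4] [Fintype F4] (hc : Fintype.card F4 = 4)
    (α : F4) (hα : α ^ 2 = α + 1)
    (ℓ j : ℕ) (hℓ : 2 ≤ ℓ) (hjeven : Even j) (hj : 1 ≤ j) (hjl : j ≤ ℓ)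
    (Z : Set (Fin (2 * ℓ) → F4)) (hZ : Z = {x | x ≠ 0 ∧ Qform α ℓ j x = 0})
    (O₀ : Set (Fin (2 * ℓ) → F4)) (hO₀ : O₀ = {x ∈ Z | x ⟨0, by omega⟩ = 0})
    (w : Fin (2 * ℓ) → F4) (hw : w ⟨1, by omega⟩ ≠ 0)
    (hval : chiSum w O₀ = -1 + 4 ^ (ℓ - 1)) :
    chiSum w (Z \ O₀) = 2 * 4 ^ (ℓ - 1) ∨ chiSum w (Z \ O₀) = -(2 * 4 ^ (ℓ - 1)) := by
  classical
  set G : ℂ := ∑ x : Fin (2 * ℓ) → F4,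
    (if Qform α ℓ j x = 0 then chi4 (∑ k, w k * x k) else 0) with hG
  set t : F4 := ∑ i : Fin ℓ, (if i.val < j then
    α * (w (ir ℓ i)) ^ 2 + w (ir ℓ i) * w (il ℓ i) + (w (il ℓ i)) ^ 2
    else w (il ℓ i) * w (ir ℓ i)) with ht
  -- orthogonality: 4 * G = ∑ c, T c
  have orth : (4 : ℂ) * G
      = ∑ c : F4, ∑ x : Fin (2 * ℓ) → F4, chi4 (c * Qform α ℓ j x + ∑ k, w k * x k) := by
    rw [Finset.sum_comm, hG, Finset.mul_sum]
    refine Finset.sum_congr rfl (fun x _ => ?_)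
    have hsplit : ∀ c : F4, chi4 (c * Qform α ℓ j x + ∑ k, w k * x k)
        = chi4 (Qform α ℓ j x * c) * chi4 (∑ k, w k * x k) := by
      intro c; rw [mul_comm c, chi4_add hc]
    rw [Finset.sum_congr rfl (fun c _ => hsplit c), ← Finset.sum_mul,
      sum_chi4_mul hc hα (Qform α ℓ j x)]
    by_cases hx : Qform α ℓ j x = 0 <;> simp [hx]
  -- evaluate ∑ c, T c
  have hT0 : ∑ x : Fin (2 * ℓ) → F4,
      chi4 ((0 : F4) * Qform α ℓ j x + ∑ k, w k * x k) = 0 := by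
    have := T_zero hc hα ℓ w ⟨1, by omega⟩ hw
    simpa using this
  have hTc : ∀ c ∈ Finset.univ \ {(0 : F4)},
      ∑ x : Fin (2 * ℓ) → F4, chi4 (c * Qform α ℓ j x + ∑ k, w k * x k)
        = 4 ^ ℓ * chi4 (t * c⁻¹) := by
    intro c hcmem
    have hcne : c ≠ 0 := by simpa using (Finset.mem_sdiff.mp hcmem).2
    rw [ht]
    exact T_ne hc hα ℓ j hjl hjeven w c hcne
  have hsum : ∑ c : F4, ∑ x : Fin (2 * ℓ) → F4, chi4 (c * Qform α ℓ j x + ∑ k, w k * x k)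
      = 4 ^ ℓ * ((if t = 0 then 4 else 0) - 1) := by
    rw [Finset.sum_eq_sum_sdiff_singleton_add (Finset.mem_univ (0 : F4)), hT0, add_zero,
      Finset.sum_congr rfl hTc, ← Finset.mul_sum]
    congr 1
    have hfull : ∑ c : F4, chi4 (t * c⁻¹) = ∑ c : F4, chi4 (t * c) :=
      Fintype.sum_equiv (Equiv.inv F4) _ _ (fun c => rfl)
    have hdiff : ∑ c ∈ Finset.univ \ {(0 : F4)}, chi4 (t * c⁻¹)
        = (∑ c : F4, chi4 (t * c⁻¹)) - chi4 (t * (0 : F4)⁻¹) := by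
      rw [Finset.sum_eq_sum_sdiff_singleton_add (Finset.mem_univ (0 : F4))
        (fun c => chi4 (t * c⁻¹))]
      ring
    rw [hdiff, hfull, sum_chi4_mul hc hα t, inv_zero, mul_zero, chi4_zero]
  -- finset bookkeeping
  have hQ0 : Qform α ℓ j (0 : Fin (2 * ℓ) → F4) = 0 := by
    rw [Qform_eq]
    simp
  set ZF : Finset (Fin (2 * ℓ) → F4) :=
    Finset.univ.filter (fun x => x ≠ 0 ∧ Qform α ℓ j x = 0) with hZF
  set OF : Finset (Fin (2 * ℓ) → F4) := ZF.filter (fun x => x ⟨0, by omega⟩ = 0) with hOF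
  have hZc : Z = ↑ZF := by rw [hZ]; ext x; simp [hZF]
  have hOc : O₀ = ↑OF := by rw [hO₀, hZc]; ext x; simp [hOF, hZF]
  have hZO : chiSum w (Z \ O₀) = chiSum w Z - chiSum w O₀ := by
    rw [chiSum, chiSum, chiSum, hZc, hOc, ← Finset.coe_sdiff, finsum_mem_coe_finset,
      finsum_mem_coe_finset, finsum_mem_coe_finset,
      Finset.sum_sdiff_eq_sub (Finset.filter_subset _ _)]
  have hZsum : chiSum w Z = G - 1 := by
    rw [chiSum, hZc, finsum_mem_coe_finset]
    have hins : Finset.univ.filter (fun x : Fin (2 * ℓ) → F4 => Qform α ℓ j x = 0)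
        = insert 0 ZF := by
      ext x
      simp only [Finset.mem_filter, Finset.mem_univ, true_and, Finset.mem_insert, hZF]
      constructor
      · intro h
        rcases eq_or_ne x 0 with h0 | h0
        · exact Or.inl h0
        · exact Or.inr ⟨h0, h⟩
      · rintro (rfl | h)
        · exact hQ0
        · exact h.2
    have hGins : G = ∑ x ∈ insert (0 : Fin (2 * ℓ) → F4) ZF, chi4 (∑ k, w k * x k) := by
      rw [hG, ← Finset.sum_filter, hins]
    have h0Z : (0 : Fin (2 * ℓ) → F4) ∉ ZF := by simp [hZF]
    rw [hGins, Finset.sum_insert h0Z]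
    have : (∑ k, w k * (0 : Fin (2 * ℓ) → F4) k) = 0 := by simp
    rw [this, chi4_zero]
    ring
  rw [hZO, hZsum, hval]
  have hpow : (4 : ℂ) ^ ℓ = 4 * 4 ^ (ℓ - 1) := by
    rw [← pow_succ']
    congr 1
    omega
  have h4 : (4 : ℂ) ≠ 0 := by norm_num
  rcases eq_or_ne t 0 with ht0 | ht0
  · left
    have h4G : (4 : ℂ) * G = 4 * (3 * 4 ^ (ℓ - 1)) := by
      rw [orth, hsum, if_pos ht0, hpow]; ring
    have hGval := mul_left_cancel₀ h4 h4G
    rw [hGval]; ring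
  · right
    have h4G : (4 : ℂ) * G = 4 * (-(4 ^ (ℓ - 1))) := by
      rw [orth, hsum, if_neg ht0, hpow]; ring
    have hGval := mul_left_cancel₀ h4 h4G
    rw [hGval]; ring
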